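/- For every real number d with 0 < d < 2 there exists a compact set E ⊆ ℂ such that the d-dimensional Hausdorff measure of E is strictly positive and finite: 0 < μH[d](E) < ∞. -/

import Mathlib

open MeasureTheory Filter Set
open scoped ENNReal NNReal Topology

namespace Stmt14
noncomputable section

/-- corner map -/
def cor (k : ZMod 4) : ℂ := Complex.mk ((k.val % 2 : ℕ) : ℝ) ((k.val / 2 : ℕ) : ℝ)

lemma cor_re (k : ZMod 4) : (cor k).re = ((k.val % 2 : ℕ) : ℝ) := rfl
lemma cor_im (k : ZMod 4) : (cor k).im = ((k.val / 2 : ℕ) : ℝ) := rfl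

lemma nat_abs_sub {m m' : ℕ} (hm : m ≤ 1) (hm' : m' ≤ 1) (h : m ≠ m') :
    |((m : ℝ) - (m' : ℝ))| = 1 := by
  interval_cases m <;> interval_cases m' <;> simp_all <;> norm_num

lemma nat_abs_sub_le {m m' : ℕ} (hm : m ≤ 1) (hm' : m' ≤ 1) :
    |((m : ℝ) - (m' : ℝ))| ≤ 1 := by
  interval_cases m <;> interval_cases m' <;> simp <;> norm_num

lemma cor_sub_re_le (a b : ZMod 4) : |(cor a - cor b).re| ≤ 1 := by
  have := Nat.mod_lt (a.val) (show 0 < 2 by norm_num)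
  have := Nat.mod_lt (b.val) (show 0 < 2 by norm_num)
  simp only [Complex.sub_re, cor_re]
  exact nat_abs_sub_le (by omega) (by omega)

lemma val_lt (a : ZMod 4) : a.val < 4 := a.val_lt

lemma cor_sub_im_le (a b : ZMod 4) : |(cor a - cor b).im| ≤ 1 := by
  have := val_lt a; have := val_lt b
  simp only [Complex.sub_im, cor_im]
  exact nat_abs_sub_le (by omega) (by omega)

lemma norm_cor_sub_le (a b : ZMod 4) : ‖cor a - cor b‖ ≤ 2 := by
  have h := Complex.norm_le_abs_re_add_abs_im (cor a - cor b)
  have h1 := cor_sub_re_le a b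
  have h2 := cor_sub_im_le a b
  calc ‖cor a - cor b‖ ≤ |(cor a - cor b).re| + |(cor a - cor b).im| := h
    _ ≤ 2 := by linarith

lemma cor_digits_ne (a b : ZMod 4) (h : a ≠ b) :
    a.val % 2 ≠ b.val % 2 ∨ a.val / 2 ≠ b.val / 2 := by
  revert a b; decide

lemma cor_sep (a b : ZMod 4) (h : a ≠ b) :
    |(cor a - cor b).re| = 1 ∨ |(cor a - cor b).im| = 1 := by
  have := val_lt a; have := val_lt b
  rcases cor_digits_ne a b h with h' | h'
  · left; simp only [Complex.sub_re, cor_re]; exact nat_abs_sub (by omega) (by omega) h'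
  · right; simp only [Complex.sub_im, cor_im]; exact nat_abs_sub (by omega) (by omega) h'

section helpers
variable {r : ℝ}

lemma geom_tail (hr0 : 0 ≤ r) (hr1 : r < 1) (n : ℕ) (c : ℕ → ℝ)
    (hc : ∀ m, 0 ≤ c m) (h0 : ∀ m < n, c m = 0) (hb : ∀ m, c m ≤ r ^ m) :
    ∑' m, c m ≤ r ^ n / (1 - r) := by
  have hgeom : Summable fun m : ℕ => r ^ m := summable_geometric_of_lt_one hr0 hr1
  have hs : Summable c := hgeom.of_nonneg_of_le hc hb
  have hshift : Summable fun i : ℕ => c (i + n) := by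
    simpa using (summable_nat_add_iff n).mpr hs
  rw [← Summable.sum_add_tsum_nat_add n hs]
  have h1 : ∑ i ∈ Finset.range n, c i = 0 :=
    Finset.sum_eq_zero fun i hi => h0 i (Finset.mem_range.mp hi)
  rw [h1, zero_add]
  have h2 : ∑' i, c (i + n) ≤ ∑' i : ℕ, r ^ i * r ^ n := by
    refine Summable.tsum_le_tsum (fun i => ?_) hshift ?_
    · rw [← pow_add]; exact hb (i + n)
    · simpa [pow_add] using (summable_nat_add_iff n).mpr hgeom
  refine h2.trans ?_
  rw [tsum_mul_right, tsum_geometric_of_lt_one hr0 hr1]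
  rw [div_eq_inv_mul]

lemma key_lower (hr0 : 0 ≤ r) (hr1 : r < 1) (n : ℕ) (c : ℕ → ℝ)
    (h0 : ∀ m < n, c m = 0) (hb : ∀ m, |c m| ≤ r ^ m) (hn : |c n| = r ^ n) :
    r ^ n - r ^ (n + 1) / (1 - r) ≤ |∑' m, c m| := by
  have hgeom : Summable fun m : ℕ => r ^ m := summable_geometric_of_lt_one hr0 hr1
  have habs : Summable fun m => |c m| := hgeom.of_nonneg_of_le (fun m => abs_nonneg _) hb
  have hs : Summable c := habs.of_abs
  have hite_abs : Summable fun m => |if m = n then 0 else c m| := by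
    refine hgeom.of_nonneg_of_le (fun m => abs_nonneg _) fun m => ?_
    by_cases h : m = n
    · simp [h]; positivity
    · simp [h]; exact hb m
  have hite : Summable fun m => if m = n then 0 else c m := hite_abs.of_abs
  have heq : ∑' m, c m = c n + ∑' m, if m = n then 0 else c m := Summable.tsum_eq_add_tsum_ite hs n
  set S := ∑' m, if m = n then 0 else c m with hS
  have hSle : |S| ≤ r ^ (n + 1) / (1 - r) := by
    have h1 : |S| ≤ ∑' m, |if m = n then 0 else c m| := by
      have := norm_tsum_le_tsum_norm (f := fun m => if m = n then 0 else c m)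
        (by simpa [Real.norm_eq_abs] using hite_abs)
      simpa [Real.norm_eq_abs] using this
    refine h1.trans ?_
    refine geom_tail hr0 hr1 (n + 1) _ (fun m => abs_nonneg _) (fun m hm => ?_) (fun m => ?_)
    · rcases Nat.lt_succ_iff_lt_or_eq.mp hm with h | h
      · simp [Nat.ne_of_lt h, h0 m h]
      · simp [h]
    · by_cases h : m = n
      · simp [h]; positivity
      · simp [h]; exact hb m
  rw [heq]
  have := abs_add_le (c n + S) (-S)
  simp only [add_neg_cancel_right, abs_neg] at this
  linarith [hn ▸ this]

end helpers

section mapf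
variable {r : ℝ}

abbrev G := ℕ → ZMod 4

/-- the coding map -/
def fmap (r : ℝ) (x : G) : ℂ := ∑' n, (r ^ n : ℝ) • cor (x n)

lemma norm_cor_le (k : ZMod 4) : ‖cor k‖ ≤ 2 := by
  have := norm_cor_sub_le k 0
  have h0 : cor 0 = 0 := by
    have : (0 : ZMod 4).val = 0 := rfl
    simp [cor, Complex.ext_iff, this]
  simpa [h0] using this

lemma summand_norm_le (hr0 : 0 ≤ r) (x : G) (n : ℕ) :
    ‖(r ^ n : ℝ) • cor (x n)‖ ≤ 2 * r ^ n := by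
  rw [norm_smul, Real.norm_eq_abs, abs_of_nonneg (by positivity)]
  have := norm_cor_le (x n)
  nlinarith [pow_nonneg hr0 n, norm_nonneg (cor (x n))]

lemma summable_fmap (hr0 : 0 ≤ r) (hr1 : r < 1) (x : G) :
    Summable fun n => (r ^ n : ℝ) • cor (x n) := by
  refine Summable.of_norm ?_
  refine Summable.of_nonneg_of_le (fun n => norm_nonneg _) (fun n => summand_norm_le hr0 x n) ?_
  exact (summable_geometric_of_lt_one hr0 hr1).mul_left 2

lemma continuous_fmap (hr0 : 0 ≤ r) (hr1 : r < 1) : Continuous (fmap r) := by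
  refine continuous_tsum (fun n => ?_) ((summable_geometric_of_lt_one hr0 hr1).mul_left 2)
    fun n x => summand_norm_le hr0 x n
  exact (continuous_const : Continuous fun _ : G => (r ^ n : ℝ)).smul
    (Continuous.comp (continuous_of_discreteTopology : Continuous cor) (continuous_apply (A := fun _ : ℕ => ZMod 4) n))

lemma fmap_sub (hr0 : 0 ≤ r) (hr1 : r < 1) (x y : G) :
    fmap r x - fmap r y = ∑' n, (r ^ n : ℝ) • (cor (x n) - cor (y n)) := by
  rw [fmap, fmap, ← Summable.tsum_sub (summable_fmap hr0 hr1 x) (summable_fmap hr0 hr1 y)]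
  simp [smul_sub]

lemma dist_fmap_le (hr0 : 0 ≤ r) (hr1 : r < 1) (x y : G) (n : ℕ)
    (h : ∀ i < n, x i = y i) :
    dist (fmap r x) (fmap r y) ≤ 2 * (r ^ n / (1 - r)) := by
  rw [dist_eq_norm, fmap_sub hr0 hr1 x y]
  have hsum : Summable fun m => ‖(r ^ m : ℝ) • (cor (x m) - cor (y m))‖ := by
    refine Summable.of_nonneg_of_le (fun m => norm_nonneg _) (fun m => ?_)
      ((summable_geometric_of_lt_one hr0 hr1).mul_left 2)
    rw [norm_smul, Real.norm_eq_abs, abs_of_nonneg (by positivity)]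
    nlinarith [norm_cor_sub_le (x m) (y m), pow_nonneg hr0 m,
      norm_nonneg (cor (x m) - cor (y m))]
  refine (norm_tsum_le_tsum_norm hsum).trans ?_
  have : ∑' m, ‖(r ^ m : ℝ) • (cor (x m) - cor (y m))‖
      ≤ ∑' m, 2 * (if m < n then (0:ℝ) else r ^ m) := by
    refine Summable.tsum_le_tsum (fun m => ?_) hsum ?_
    · by_cases hm : m < n
      · simp [hm, h m hm]
      · simp only [hm, if_false]
        rw [norm_smul, Real.norm_eq_abs, abs_of_nonneg (by positivity)]
        nlinarith [norm_cor_sub_le (x m) (y m), pow_nonneg hr0 m,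
          norm_nonneg (cor (x m) - cor (y m))]
    · refine Summable.mul_left 2 ?_
      refine Summable.of_nonneg_of_le (fun m => ?_) (fun m => ?_)
        (summable_geometric_of_lt_one hr0 hr1)
      · by_cases hm : m < n <;> simp [hm] <;> positivity
      · by_cases hm : m < n <;> simp [hm] <;> positivity
  refine this.trans ?_
  rw [tsum_mul_left]
  have hle := geom_tail hr0 hr1 n (fun m => if m < n then (0:ℝ) else r ^ m)
    (fun m => by by_cases hm : m < n <;> simp [hm] <;> positivity)
    (fun m hm => by simp [hm])
    (fun m => by by_cases hm : m < n <;> simp [hm] <;> positivity)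
  nlinarith [hle]

lemma sep_const_pos (hr0 : 0 < r) (hr1 : r < 1/2) : 0 < (1 - 2*r) / (1 - r) := by
  apply div_pos <;> linarith

lemma dist_fmap_ge (hr0 : 0 < r) (hr1 : r < 1/2) (x y : G) (n : ℕ)
    (h : ∀ i < n, x i = y i) (hne : x n ≠ y n) :
    (1 - 2*r) / (1 - r) * r ^ n ≤ dist (fmap r x) (fmap r y) := by
  have hr1' : r < 1 := by linarith
  have hd : fmap r x - fmap r y = ∑' m, (r ^ m : ℝ) • (cor (x m) - cor (y m)) :=
    fmap_sub hr0.le hr1' x y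
  set u : ℕ → ℂ := fun m => (r ^ m : ℝ) • (cor (x m) - cor (y m)) with hu
  have hsum : Summable u := by
    refine Summable.of_norm ?_
    refine Summable.of_nonneg_of_le (fun m => norm_nonneg _) (fun m => ?_)
      ((summable_geometric_of_lt_one hr0.le hr1').mul_left 2)
    rw [hu, norm_smul, Real.norm_eq_abs, abs_of_nonneg (by positivity)]
    nlinarith [norm_cor_sub_le (x m) (y m), pow_nonneg hr0.le m,
      norm_nonneg (cor (x m) - cor (y m))]
  have halg : (1 - 2*r) / (1 - r) * r ^ n = r ^ n - r ^ (n+1) / (1 - r) := by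
    have : (1:ℝ) - r ≠ 0 := by linarith
    field_simp
    ring
  rw [halg, dist_eq_norm, hd]
  rcases cor_sep (x n) (y n) hne with hcoord | hcoord
  · -- real part separates
    have key := key_lower hr0.le hr1' n (fun m => (u m).re)
      (fun m hm => by simp [hu, h m hm])
      (fun m => by
        simp only [hu, Complex.smul_re, smul_eq_mul, abs_mul, abs_pow,
          abs_of_nonneg hr0.le]
        calc r ^ m * |(cor (x m) - cor (y m)).re| ≤ r ^ m * 1 :=
              mul_le_mul_of_nonneg_left (cor_sub_re_le _ _) (by positivity)
          _ = r ^ m := mul_one _)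
      (by
        simp only [hu, Complex.smul_re, smul_eq_mul, abs_mul, abs_pow,
          abs_of_nonneg hr0.le, hcoord, mul_one])
    have hre : (∑' m, u m).re = ∑' m, (u m).re := Complex.re_tsum hsum
    calc r ^ n - r ^ (n+1) / (1 - r) ≤ |∑' m, (u m).re| := key
      _ = |(∑' m, u m).re| := by rw [hre]
      _ ≤ ‖∑' m, u m‖ := Complex.abs_re_le_norm _
  · -- imaginary part separates
    have key := key_lower hr0.le hr1' n (fun m => (u m).im)
      (fun m hm => by simp [hu, h m hm])
      (fun m => by
        simp only [hu, Complex.smul_im, smul_eq_mul, abs_mul, abs_pow,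
          abs_of_nonneg hr0.le]
        calc r ^ m * |(cor (x m) - cor (y m)).im| ≤ r ^ m * 1 :=
              mul_le_mul_of_nonneg_left (cor_sub_im_le _ _) (by positivity)
          _ = r ^ m := mul_one _)
      (by
        simp only [hu, Complex.smul_im, smul_eq_mul, abs_mul, abs_pow,
          abs_of_nonneg hr0.le, hcoord, mul_one])
    have him : (∑' m, u m).im = ∑' m, (u m).im := Complex.im_tsum hsum
    calc r ^ n - r ^ (n+1) / (1 - r) ≤ |∑' m, (u m).im| := key
      _ = |(∑' m, u m).im| := by rw [him]
      _ ≤ ‖∑' m, u m‖ := Complex.abs_im_le_norm _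

end mapf

section cylinders
open scoped Pointwise

/-- Cylinder set in `G`. -/
def Cyl (n : ℕ) (w : Fin n → ZMod 4) : Set G := {x : G | ∀ i : Fin n, x i = w i}

lemma isOpen_Cyl (n : ℕ) (w : Fin n → ZMod 4) : IsOpen (Cyl n w) := by
  have : Cyl n w = ⋂ i : Fin n, (fun x : G => x i) ⁻¹' {w i} := by
    ext x; simp [Cyl]
  rw [this]
  exact isOpen_iInter_of_finite fun i =>
    (continuous_apply (i : ℕ)).isOpen_preimage _ (isOpen_discrete _)

lemma measurableSet_Cyl (n : ℕ) (w : Fin n → ZMod 4) : MeasurableSet (Cyl n w) :=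
  (isOpen_Cyl n w).measurableSet

/-- the Haar probability measure on `G` -/
def nu : Measure G :=
  Measure.addHaarMeasure ⟨⟨Set.univ, isCompact_univ⟩, by simp⟩

instance : nu.IsAddLeftInvariant := by unfold nu; infer_instance

lemma nu_univ : nu Set.univ = 1 := Measure.addHaarMeasure_self

/-- extension of a finite word by zeros -/
def ext (n : ℕ) (w : Fin n → ZMod 4) : G := fun i => if h : i < n then w ⟨i, h⟩ else 0

lemma nu_Cyl_eq (n : ℕ) (w w' : Fin n → ZMod 4) : nu (Cyl n w) = nu (Cyl n w') := by
  have hset : Cyl n w = (fun x : G => ext n (w' - w) + x) ⁻¹' Cyl n w' := by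
    ext x
    simp only [Cyl, mem_preimage, mem_setOf_eq, Pi.add_apply]
    constructor
    · intro hx i
      have hi : (i : ℕ) < n := i.2
      simp only [ext, Pi.sub_apply, dif_pos hi, Fin.eta, hx i]
      abel
    · intro hx i
      have hi : (i : ℕ) < n := i.2
      have h1 := hx i
      simp only [ext, Pi.sub_apply, dif_pos hi, Fin.eta] at h1
      have h2 : w' i - w i + x i = w' i - w i + w i := by rw [h1]; abel
      exact add_left_cancel h2
  rw [hset, measure_preimage_add]

lemma iUnion_Cyl (n : ℕ) : (⋃ w : Fin n → ZMod 4, Cyl n w) = Set.univ := by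
  ext x
  simp only [mem_iUnion, mem_univ, iff_true]
  exact ⟨fun i => x i, fun i => rfl⟩

lemma disjoint_Cyl (n : ℕ) : Pairwise (Function.onFun Disjoint (Cyl n)) := by
  intro w w' hne
  rw [Function.onFun, Set.disjoint_left]
  rintro x hx hx'
  exact hne (funext fun i => (hx i).symm.trans (hx' i))

lemma nu_Cyl (n : ℕ) (w : Fin n → ZMod 4) : nu (Cyl n w) = ((4 : ℝ≥0∞) ^ n)⁻¹ := by
  have hsum : nu Set.univ = ∑' w' : Fin n → ZMod 4, nu (Cyl n w') := by
    rw [← iUnion_Cyl n]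
    exact measure_iUnion (disjoint_Cyl n) (measurableSet_Cyl n)
  have hconst : ∀ w' : Fin n → ZMod 4, nu (Cyl n w') = nu (Cyl n w) := fun w' =>
    nu_Cyl_eq n w' w
  rw [nu_univ] at hsum
  rw [tsum_congr hconst, tsum_fintype] at hsum
  rw [Finset.sum_const, Finset.card_univ] at hsum
  have hcard : Fintype.card (Fin n → ZMod 4) = 4 ^ n := by
    rw [Fintype.card_fun]
    simp [ZMod.card]
  rw [hcard, nsmul_eq_mul, Nat.cast_pow, Nat.cast_ofNat] at hsum
  have h4 : ((4 : ℝ≥0∞)) ^ n ≠ 0 := by positivity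
  have h4' : ((4 : ℝ≥0∞)) ^ n ≠ ⊤ := by
    exact ENNReal.pow_ne_top (by norm_num)
  calc nu (Cyl n w) = ((4:ℝ≥0∞) ^ n)⁻¹ * ((4:ℝ≥0∞) ^ n * nu (Cyl n w)) := by
        rw [← mul_assoc, ENNReal.inv_mul_cancel h4 h4', one_mul]
    _ = ((4:ℝ≥0∞) ^ n)⁻¹ * 1 := by rw [← hsum]
    _ = ((4:ℝ≥0∞) ^ n)⁻¹ := mul_one _

end cylinders

section main
variable {r : ℝ}

/-- the Cantor-type set -/
def EE (r : ℝ) : Set ℂ := Set.range (fmap r)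

/-- the natural measure on it -/
def mu (r : ℝ) : Measure ℂ := nu.map (fmap r)

lemma isCompact_EE (hr0 : 0 ≤ r) (hr1 : r < 1) : IsCompact (EE r) :=
  isCompact_range (continuous_fmap hr0 hr1)

lemma mu_apply (hr0 : 0 ≤ r) (hr1 : r < 1) {s : Set ℂ} (hs : MeasurableSet s) :
    mu r s = nu (fmap r ⁻¹' s) :=
  Measure.map_apply (continuous_fmap hr0 hr1).measurable hs

lemma mu_EE (hr0 : 0 ≤ r) (hr1 : r < 1) : mu r (EE r) = 1 := by
  rw [mu_apply hr0 hr1 ((isCompact_EE hr0 hr1).isClosed.measurableSet)]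
  have h : fmap r ⁻¹' EE r = Set.univ := eq_univ_of_forall fun x => mem_range_self x
  rw [h, nu_univ]

lemma agree_of_close (hr0 : 0 < r) (hr1 : r < 1/2) (x y : G) (n : ℕ)
    (h : dist (fmap r x) (fmap r y) < (1 - 2*r)/(1-r) * r ^ n) :
    ∀ i ≤ n, x i = y i := by
  by_contra hcon
  push_neg at hcon
  obtain ⟨i, hin, hne⟩ := hcon
  have hex : ∃ j, x j ≠ y j := ⟨i, hne⟩
  classical
  have hj : x (Nat.find hex) ≠ y (Nat.find hex) := Nat.find_spec hex
  have hjmin : ∀ m < Nat.find hex, x m = y m := fun m hm =>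
    not_not.mp (Nat.find_min hex hm)
  have hji : Nat.find hex ≤ i := Nat.find_min' hex hne
  have hge := dist_fmap_ge hr0 hr1 x y (Nat.find hex) hjmin hj
  have hrn : r ^ n ≤ r ^ (Nat.find hex) :=
    pow_le_pow_of_le_one hr0.le (by linarith) (hji.trans hin)
  have hgpos := sep_const_pos hr0 hr1
  nlinarith [hge, h]

lemma mu_le_of_diam_lt (hr0 : 0 < r) (hr1 : r < 1/2) (s : Set ℂ) (n : ℕ)
    (h : EMetric.diam s < ENNReal.ofReal ((1 - 2*r)/(1-r) * r ^ n)) :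
    mu r s ≤ ((4 : ℝ≥0∞) ^ (n+1))⁻¹ := by
  have hr1' : r < 1 := by linarith
  have hcl : EMetric.diam (closure s) = EMetric.diam s := EMetric.diam_closure s
  have hmono : mu r s ≤ mu r (closure s) := measure_mono subset_closure
  refine hmono.trans ?_
  rw [mu_apply hr0.le hr1' isClosed_closure.measurableSet]
  rcases eq_empty_or_nonempty (fmap r ⁻¹' closure s) with he | ⟨x₀, hx₀⟩
  · simp [he]
  · have hsub : fmap r ⁻¹' closure s ⊆ Cyl (n+1) (fun i => x₀ i) := by
      intro y hy i
      have hd : edist (fmap r y) (fmap r x₀) ≤ EMetric.diam (closure s) :=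
        EMetric.edist_le_diam_of_mem hy hx₀
      have hd' : dist (fmap r y) (fmap r x₀) < (1 - 2*r)/(1-r) * r ^ n := by
        have h2 := lt_of_le_of_lt (hcl ▸ hd) h
        rw [edist_dist] at h2
        exact (ENNReal.ofReal_lt_ofReal_iff_of_nonneg dist_nonneg).mp h2
      exact agree_of_close hr0 hr1 y x₀ n hd' i (Nat.lt_succ_iff.mp i.2)
    calc nu (fmap r ⁻¹' closure s) ≤ nu (Cyl (n+1) (fun i => x₀ i)) := measure_mono hsub
      _ = ((4 : ℝ≥0∞) ^ (n+1))⁻¹ := nu_Cyl _ _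

lemma diam_image_Cyl (hr0 : 0 < r) (hr1 : r < 1) (n : ℕ) (w : Fin n → ZMod 4) :
    EMetric.diam (fmap r '' Cyl n w) ≤ ENNReal.ofReal (2 * (r ^ n / (1 - r))) := by
  apply EMetric.diam_le
  rintro _ ⟨x, hx, rfl⟩ _ ⟨y, hy, rfl⟩
  rw [edist_dist]
  apply ENNReal.ofReal_le_ofReal
  apply dist_fmap_le hr0.le hr1
  intro i hi
  exact (hx ⟨i, hi⟩).trans (hy ⟨i, hi⟩).symm

lemma EE_subset_iUnion (n : ℕ) : EE r ⊆ ⋃ w : Fin n → ZMod 4, fmap r '' Cyl n w := by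
  rintro _ ⟨x, rfl⟩
  exact mem_iUnion.mpr ⟨fun i => x i, ⟨x, fun i => rfl, rfl⟩⟩

end main

section final
variable {r d : ℝ}

lemma pow_rpow_eq (hr0 : 0 < r) (hrd : r ^ d = 1/4) (n : ℕ) :
    ((r ^ n : ℝ)) ^ d = (1/4 : ℝ) ^ n := by
  rw [← Real.rpow_natCast r n, ← Real.rpow_mul hr0.le, mul_comm,
    Real.rpow_mul hr0.le, hrd, Real.rpow_natCast]

/-- finiteness of the Hausdorff measure -/
lemma hausdorff_EE_lt_top (hr0 : 0 < r) (hr1 : r < 1/2) (hd0 : 0 < d)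
    (hrd : r ^ d = 1/4) : μH[d] (EE r) < ⊤ := by
  have hr1' : r < 1 := by linarith
  have hle := Measure.hausdorffMeasure_le_liminf_sum (X := ℂ) d (EE r)
    (fun n : ℕ => ENNReal.ofReal (2 * (r ^ n / (1 - r))))
    (by
      have : Tendsto (fun n : ℕ => 2 * (r ^ n / (1 - r))) atTop (nhds 0) := by
        have h1 : Tendsto (fun n : ℕ => r ^ n) atTop (nhds 0) :=
          tendsto_pow_atTop_nhds_zero_of_lt_one hr0.le hr1'
        have := (h1.div_const (1 - r)).const_mul 2
        simpa using this
      have h2 := (ENNReal.continuous_ofReal.tendsto 0).comp this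
      rw [ENNReal.ofReal_zero] at h2
      exact h2)
    (fun n w => fmap r '' Cyl n w)
    (Eventually.of_forall fun n w => diam_image_Cyl hr0 hr1' n w)
    (Eventually.of_forall fun n => EE_subset_iUnion n)
  refine lt_of_le_of_lt (hle.trans ?_)
    (ENNReal.ofReal_lt_top : ENNReal.ofReal ((2 / (1 - r)) ^ d) < ⊤)
  refine liminf_le_of_frequently_le (Frequently.of_forall fun n => ?_)
  have h1r : (0:ℝ) < 1 - r := by linarith
  have hKpos : (0:ℝ) < 2 * (r ^ n / (1 - r)) :=
    mul_pos two_pos (div_pos (pow_pos hr0 n) h1r)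
  calc ∑ w : Fin n → ZMod 4, EMetric.diam (fmap r '' Cyl n w) ^ d
      ≤ ∑ _w : Fin n → ZMod 4, ENNReal.ofReal ((2 * (r ^ n / (1 - r))) ^ d) := by
        refine Finset.sum_le_sum fun w _ => ?_
        rw [← ENNReal.ofReal_rpow_of_pos hKpos]
        exact ENNReal.rpow_le_rpow (diam_image_Cyl hr0 hr1' n w) hd0.le
    _ = (Fintype.card (Fin n → ZMod 4) : ℝ≥0∞) * ENNReal.ofReal ((2 * (r ^ n / (1 - r))) ^ d) := by
        rw [Finset.sum_const, Finset.card_univ, nsmul_eq_mul]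
    _ = ENNReal.ofReal ((4:ℝ) ^ n * (2 * (r ^ n / (1 - r))) ^ d) := by
        rw [Fintype.card_fun]
        simp only [ZMod.card, Fintype.card_fin]
        rw [ENNReal.ofReal_mul (by positivity)]
        congr 1
        rw [← ENNReal.ofReal_natCast]
        congr 1
        push_cast
        ring
    _ = ENNReal.ofReal ((2 / (1 - r)) ^ d) := by
        congr 1
        have hsplit : 2 * (r ^ n / (1 - r)) = (2 / (1 - r)) * r ^ n := by ring
        rw [hsplit, Real.mul_rpow (div_nonneg (by norm_num) h1r.le)
          (pow_nonneg hr0.le n), pow_rpow_eq hr0 hrd n]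
        have : (4:ℝ) ^ n * ((2 / (1 - r)) ^ d * (1/4:ℝ) ^ n)
            = (2 / (1 - r)) ^ d * ((4:ℝ) * (1/4)) ^ n := by
          rw [mul_pow]; ring
        rw [this]
        norm_num

/-- positivity of the Hausdorff measure -/
lemma hausdorff_EE_pos (hr0 : 0 < r) (hr1 : r < 1/2) (hd0 : 0 < d)
    (hrd : r ^ d = 1/4) : 0 < μH[d] (EE r) := by
  have hr1' : r < 1 := by linarith
  set g : ℝ := (1 - 2*r)/(1-r) with hg
  have hgpos : 0 < g := sep_const_pos hr0 hr1
  set C : ℝ≥0∞ := ENNReal.ofReal ((1/g) ^ d) with hC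
  have hCpos : 0 < C := ENNReal.ofReal_pos.mpr (Real.rpow_pos_of_pos (one_div_pos.mpr hgpos) d)
  have hCne : C ≠ 0 := hCpos.ne'
  have hCtop : C ≠ ⊤ := ENNReal.ofReal_ne_top
  -- the Frostman property
  have hfrost : ∀ s : Set ℂ, EMetric.diam s ≤ ENNReal.ofReal (g * r) →
      (C⁻¹ • mu r) s ≤ EMetric.diam s ^ d := by
    intro s hs
    have hsne : EMetric.diam s ≠ ⊤ := (hs.trans_lt ENNReal.ofReal_lt_top).ne
    set ρ : ℝ := (EMetric.diam s).toReal with hρ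
    have hρnonneg : 0 ≤ ρ := ENNReal.toReal_nonneg
    have hρle : ρ ≤ g * r := ENNReal.toReal_le_of_le_ofReal (mul_pos hgpos hr0).le hs
    rcases eq_or_lt_of_le hρnonneg with hρ0 | hρpos
    · -- diameter zero: the measure of s is 0
      have hdiam0 : EMetric.diam s = 0 := by
        rcases (ENNReal.toReal_eq_zero_iff _).mp hρ0.symm with h | h
        · exact h
        · exact absurd h hsne
      have hmu0 : mu r s = 0 := by
        have hall : ∀ m : ℕ, mu r s ≤ ((4 : ℝ≥0∞) ^ (m+1))⁻¹ := fun m => by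
          refine mu_le_of_diam_lt hr0 hr1 s m ?_
          rw [hdiam0]
          exact ENNReal.ofReal_pos.mpr (mul_pos hgpos (pow_pos hr0 m))
        have htend : Tendsto (fun m : ℕ => ((4 : ℝ≥0∞) ^ (m+1))⁻¹) atTop (nhds 0) := by
          simp only [ENNReal.inv_pow]
          have h4 : (4 : ℝ≥0∞)⁻¹ < 1 := by
            rw [ENNReal.inv_lt_one]; norm_num
          exact (ENNReal.tendsto_pow_atTop_nhds_zero_of_lt_one h4).comp
            (tendsto_add_atTop_nat 1)
        exact le_antisymm (ge_of_tendsto htend (Eventually.of_forall hall)) zero_le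
      rw [Measure.smul_apply, hmu0, smul_eq_mul, mul_zero]
      exact zero_le
    · -- positive diameter
      have hex : ∃ m : ℕ, g * r ^ m ≤ ρ := by
        have h1 : Tendsto (fun m : ℕ => g * r ^ m) atTop (nhds 0) := by
          have := (tendsto_pow_atTop_nhds_zero_of_lt_one hr0.le hr1').const_mul g
          simpa using this
        rcases (h1.eventually (eventually_lt_nhds hρpos)).exists with ⟨m, hm⟩
        exact ⟨m, hm.le⟩
      classical
      obtain ⟨n, hspec, hmin⟩ : ∃ n : ℕ, g * r ^ (n+1) ≤ ρ ∧ ρ < g * r ^ n := by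
        have hmspec : g * r ^ (Nat.find hex) ≤ ρ := Nat.find_spec hex
        have hmmin : ∀ j < Nat.find hex, ρ < g * r ^ j := fun j hj =>
          lt_of_not_ge (Nat.find_min hex hj)
        have hmpos : 0 < Nat.find hex := by
          rcases Nat.eq_zero_or_pos (Nat.find hex) with h0 | h
          · exfalso
            have h1 := hmspec
            rw [h0, pow_zero, mul_one] at h1
            nlinarith
          · exact h
        exact ⟨Nat.find hex - 1, by rwa [Nat.sub_add_cancel hmpos],
          hmmin _ (by omega)⟩
      have hdiam_eq : EMetric.diam s = ENNReal.ofReal ρ :=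
        (ENNReal.ofReal_toReal hsne).symm
      have hmu_le : mu r s ≤ ((4 : ℝ≥0∞) ^ (n+1))⁻¹ := by
        refine mu_le_of_diam_lt hr0 hr1 s n ?_
        rw [hdiam_eq]
        have hh : (1 - 2*r)/(1-r) * r ^ n = g * r ^ n := by rw [hg]
        rw [hh]
        exact (ENNReal.ofReal_lt_ofReal_iff (mul_pos hgpos (pow_pos hr0 n))).mpr hmin
      -- now convert
      have hr_le : r ^ (n+1) ≤ ρ / g := by
        rw [le_div_iff₀ hgpos]
        nlinarith [hspec]
      have hkey : ((4 : ℝ≥0∞) ^ (n+1))⁻¹ ≤ C * EMetric.diam s ^ d := by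
        have h1 : ((4 : ℝ≥0∞) ^ (n+1))⁻¹ = ENNReal.ofReal ((1/4 : ℝ) ^ (n+1)) := by
          rw [ENNReal.ofReal_pow (by norm_num), ENNReal.inv_pow]
          congr 1
          rw [ENNReal.ofReal_div_of_pos (by norm_num)]
          norm_num
        rw [h1, ← pow_rpow_eq hr0 hrd (n+1)]
        have h2 : ((r ^ (n+1) : ℝ)) ^ d ≤ (ρ / g) ^ d :=
          Real.rpow_le_rpow (pow_nonneg hr0.le _) hr_le hd0.le
        refine (ENNReal.ofReal_le_ofReal h2).trans ?_
        have h3 : (ρ / g : ℝ) ^ d = (1/g) ^ d * ρ ^ d := by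
          rw [div_eq_mul_one_div ρ g,
            Real.mul_rpow hρnonneg (one_div_nonneg.mpr hgpos.le)]
          ring
        rw [h3, ENNReal.ofReal_mul (Real.rpow_nonneg (one_div_nonneg.mpr hgpos.le) d),
          hdiam_eq,
          ← ENNReal.ofReal_rpow_of_pos hρpos]
      calc (C⁻¹ • mu r) s = C⁻¹ * mu r s := by rw [Measure.smul_apply, smul_eq_mul]
        _ ≤ C⁻¹ * (C * EMetric.diam s ^ d) := by
            exact mul_le_mul_right (hmu_le.trans hkey) _
        _ = (C⁻¹ * C) * EMetric.diam s ^ d := by rw [mul_assoc]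
        _ = EMetric.diam s ^ d := by rw [ENNReal.inv_mul_cancel hCne hCtop, one_mul]
  -- apply the mass distribution principle
  have hmain : (C⁻¹ • mu r) ≤ μH[d] :=
    Measure.le_hausdorffMeasure d _ (ENNReal.ofReal (g * r))
      (ENNReal.ofReal_pos.mpr (mul_pos hgpos hr0)) hfrost
  have h1 : (C⁻¹ • mu r) (EE r) ≤ μH[d] (EE r) := Measure.le_iff'.mp hmain (EE r)
  have h2 : (C⁻¹ • mu r) (EE r) = C⁻¹ := by
    rw [Measure.smul_apply, smul_eq_mul, mu_EE hr0.le hr1', mul_one]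
  rw [h2] at h1
  exact lt_of_lt_of_le (ENNReal.inv_pos.mpr hCtop) h1

end final

end
end Stmt14

/-- For every `0 < d < 2` there exists a compact set `E ⊆ ℂ` whose `d`-dimensional
Hausdorff measure is strictly positive and finite. -/
theorem stmt14 (d : ℝ) (hd0 : 0 < d) (hd2 : d < 2) :
    ∃ E : Set ℂ, IsCompact E ∧ 0 < μH[d] E ∧ μH[d] E < ⊤ := by
  set r : ℝ := (2 : ℝ) ^ (-2/d) with hrdef
  have hr0 : 0 < r := Real.rpow_pos_of_pos two_pos _
  have hr1 : r < 1/2 := by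
    have h1 : (-2/d : ℝ) < -1 := by
      rw [div_lt_iff₀ hd0]
      nlinarith
    have h2 : (2:ℝ) ^ (-2/d : ℝ) < (2:ℝ) ^ (-1 : ℝ) :=
      Real.rpow_lt_rpow_left_iff one_lt_two |>.mpr h1
    have h3 : (2:ℝ) ^ (-1 : ℝ) = 1/2 := by
      rw [Real.rpow_neg_one]
      norm_num
    rw [hrdef]
    rw [h3] at h2
    exact h2
  have hrd : r ^ d = 1/4 := by
    rw [hrdef, ← Real.rpow_mul (by norm_num : (0:ℝ) ≤ 2)]
    have hexp : (-2/d : ℝ) * d = -2 := div_mul_cancel₀ (-2) hd0.ne'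
    rw [hexp, show (-2:ℝ) = ((-2 : ℤ) : ℝ) by norm_num, Real.rpow_intCast]
    norm_num
  exact ⟨Stmt14.EE r, Stmt14.isCompact_EE hr0.le (by linarith),
    Stmt14.hausdorff_EE_pos hr0 hr1 hd0 hrd,
    Stmt14.hausdorff_EE_lt_top hr0 hr1 hd0 hrd⟩
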